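/- Let k be a field of characteristic 0 and n ≥ 2 an integer, and let A = kQ/(p₂p₁) be the gentle algebra of the cylinder dissection together with the bilinear map μ̃ determined by μ̃(p₂,p₁) = q̄. Then the deformed product a ∗ b := a·b + μ̃(a,b) on the underlying k-vector space of A is associative, and the original unit 1 of A is also a two-sided unit for ∗; hence (A, ∗) is a unital associative k-algebra (a strict deformation of A in the direction of μ̃). -/

import Mathlib

set_option maxHeartbeats 2000000
set_option maxRecDepth 8000


/-!
`CylIdx n` indexes the `k`-basis of the gentle algebra `A = kQ/(p₂p₁)` of the cylinder
dissection: the quiver `Q` has vertices `u₀, …, u_{n-1}, v` (encoded as `0, …, n-1, n`),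
arrows `q_i : u_{i-1} → u_i` for `1 ≤ i ≤ n-1`, `p₁ : u₀ → v` and `p₂ : v → u_{n-1}`.
The basis of `A` consists of the trivial paths `e x`, the arrows `p₁`, `p₂`, and the
paths `q i j = q_j ⋯ q_i` for `1 ≤ i ≤ j ≤ n-1`.
-/
inductive CylIdx (n : ℕ) : Type
  | e : (x : ℕ) → x ≤ n → CylIdx n
  | p1 : CylIdx n
  | p2 : CylIdx n
  | q : (i j : ℕ) → 1 ≤ i → i ≤ j → j ≤ n - 1 → CylIdx n

namespace CylIdx

/-- Source vertex of a basis path (vertex `u_x` is encoded `x`, the vertex `v` as `n`). -/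
def src {n : ℕ} : CylIdx n → ℕ
  | e x _ => x
  | p1 => 0
  | p2 => n
  | q i _ _ _ _ => i - 1

/-- Target vertex of a basis path. -/
def tgt {n : ℕ} : CylIdx n → ℕ
  | e x _ => x
  | p1 => n
  | p2 => n - 1
  | q _ j _ _ _ => j

end CylIdx

/-- Structure constants of `A = kQ/(p₂p₁)`: the product `b · a` of two basis paths is a
basis path (the concatenation) or zero; note `p₂ · p₁ = 0` is the gentle relation. -/
def cylMul {n : ℕ} : CylIdx n → CylIdx n → Option (CylIdx n)
  | .e x _, a => if x = a.tgt then some a else none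
  | b, .e x _ => if b.src = x then some b else none
  | .q i' j' _ h2 h3, .q i j g1 g2 _ =>
      if h : i' = j + 1 then some (.q i j' g1 (by omega) h3) else none
  | _, _ => none


/-- **The deformed product is associative and unital.** On the gentle algebra
`A = kQ/(p₂p₁)` of the cylinder dissection, the deformed product `a ∗ b := a·b + μ̃(a,b)`
is associative and has the original unit `1` of `A` as a two-sided unit; hence `(A, ∗)`
is a unital associative `k`-algebra (a strict deformation of `A` in the direction
of `μ̃`). -/
theorem cylinder_deformed_product_associative_unital
    (k : Type*) [Field k] [CharZero k]
    (n : ℕ) (hn : 2 ≤ n)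
    (A : Type*) [Ring A] [Algebra k A]
    (B : Module.Basis (CylIdx n) k A)
    (hmul : ∀ b a : CylIdx n, B b * B a = (cylMul b a).elim 0 B)
    (hone : (1 : A) = ∑ x ∈ (Finset.range (n + 1)).attach,
      B (.e x.1 (by have := Finset.mem_range.mp x.2; omega)))
    (μ : A →ₗ[k] A →ₗ[k] A)
    (hμ1 : μ (B .p2) (B .p1) = B (.q 1 (n - 1) le_rfl (by omega) le_rfl))
    (hμ0 : ∀ b a : CylIdx n, ¬(b = .p2 ∧ a = .p1) → μ (B b) (B a) = 0) :
    (∀ a b c : A,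
        (a * b + μ a b) * c + μ (a * b + μ a b) c
          = a * (b * c + μ b c) + μ a (b * c + μ b c))
      ∧ (∀ a : A, 1 * a + μ 1 a = a ∧ a * 1 + μ a 1 = a) := by
  classical
  have hq1 : 1 ≤ n - 1 := by omega
  have hμ_ne : ∀ a : CylIdx n, a ≠ .p2 → μ (B a) = 0 := fun a ha =>
    B.ext fun b => by simp [hμ0 a b (fun h => ha h.1)]
  have hμ_ne' : ∀ c : CylIdx n, c ≠ .p1 → ∀ x : A, μ x (B c) = 0 := by
    intro c hc x
    have h : μ.flip (B c) = 0 := B.ext fun b => by simp [hμ0 b c (fun h => hc h.2)]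
    simpa using DFunLike.congr_fun h x
  have hμB : ∀ a b : CylIdx n,
      μ (B a) (B b) = if a = .p2 ∧ b = .p1 then B (.q 1 (n-1) le_rfl hq1 le_rfl) else 0 := by
    intro a b
    by_cases h : a = .p2 ∧ b = .p1
    · obtain ⟨rfl, rfl⟩ := h; simpa using hμ1
    · simp [h, hμ0 a b h]
  have hμO : ∀ (o : Option (CylIdx n)) (c : CylIdx n),
      μ (o.elim 0 B) (B c) = if o = some .p2 ∧ c = .p1 then B (.q 1 (n-1) le_rfl hq1 le_rfl) else 0 := by
    intro o c
    cases o with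
    | none => simp
    | some d =>
      simp only [Option.elim, hμB, Option.some_inj]
  have hμO' : ∀ (b : CylIdx n) (o : Option (CylIdx n)),
      μ (B b) (o.elim 0 B) = if b = .p2 ∧ o = some .p1 then B (.q 1 (n-1) le_rfl hq1 le_rfl) else 0 := by
    intro b o
    cases o with
    | none => simp
    | some d => simp only [Option.elim, hμB, Option.some_inj]
  -- key computation on basis elements
  have key : ∀ a b c : CylIdx n,
      μ (B a) (B b) * B c + μ (B a * B b) (B c)
        = B a * μ (B b) (B c) + μ (B a) (B b * B c) := by
    intro a b c
    rw [hmul a b, hmul b c, hμB a b, hμB b c, hμO, hμO', ite_mul, zero_mul, mul_ite, mul_zero,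
      hmul (.q 1 (n-1) le_rfl hq1 le_rfl) c, hmul a (.q 1 (n-1) le_rfl hq1 le_rfl)]
    clear hμB hμO hμO' hμ_ne hμ_ne' hμ1 hμ0 hmul hone
    rcases a with ⟨x, hx⟩ | _ | _ | ⟨i, j, g1, g2, g3⟩ <;>
      rcases b with ⟨y, hy⟩ | _ | _ | ⟨i', j', g1', g2', g3'⟩ <;>
      rcases c with ⟨z, hz⟩ | _ | _ | ⟨i'', j'', g1'', g2'', g3''⟩ <;>
      simp [cylMul, CylIdx.src, CylIdx.tgt] <;>
      first | (split_ifs <;> simp_all <;> omega) | (simp [eq_comm] <;> split_ifs <;> simp_all)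
  -- double-μ terms vanish
  have d1 : ∀ a b c : CylIdx n, μ (μ (B a) (B b)) (B c) = 0 := by
    intro a b c
    rw [hμB]
    split_ifs with h
    · exact DFunLike.congr_fun (hμ_ne (.q 1 (n-1) le_rfl hq1 le_rfl) (by simp)) _
    · simp
  have d2 : ∀ a b c : CylIdx n, μ (B a) (μ (B b) (B c)) = 0 := by
    intro a b c
    rw [hμB b c]
    split_ifs with h
    · exact hμ_ne' (.q 1 (n-1) le_rfl hq1 le_rfl) (by simp) _
    · simp
  -- associativity on basis elements for the deformed product
  have Dkey : ∀ a b c : CylIdx n,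
      (B a * B b + μ (B a) (B b)) * B c + μ (B a * B b + μ (B a) (B b)) (B c)
        = B a * (B b * B c + μ (B b) (B c)) + μ (B a) (B b * B c + μ (B b) (B c)) := by
    intro a b c
    simp only [add_mul, mul_add, map_add, LinearMap.add_apply, d1, d2, add_zero]
    rw [mul_assoc, add_assoc, add_assoc, key a b c]
  -- bundle the deformed product as a bilinear map and extend by linearity
  set D : A →ₗ[k] A →ₗ[k] A := LinearMap.mul k A + μ with hDdef
  have hD : ∀ x y : A, D x y = x * y + μ x y := fun x y => by
    simp [hDdef, LinearMap.mul_apply']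
  have hL : D.compr₂ D = ((LinearMap.llcomp k A A A).comp D).compl₂ D := by
    refine B.ext fun a => B.ext fun b => B.ext fun c => ?_
    simp only [LinearMap.compr₂_apply, LinearMap.compl₂_apply, LinearMap.comp_apply,
      LinearMap.llcomp_apply, hD]
    exact Dkey a b c
  constructor
  · intro a b c
    have h := DFunLike.congr_fun (DFunLike.congr_fun (DFunLike.congr_fun hL a) b) c
    simpa only [LinearMap.compr₂_apply, LinearMap.compl₂_apply, LinearMap.comp_apply,
      LinearMap.llcomp_apply, hD] using h
  · intro a
    have h1 : μ (1 : A) = 0 := by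
      rw [hone, map_sum]
      exact Finset.sum_eq_zero fun x _ => hμ_ne _ (by simp)
    have h2 : μ a (1 : A) = 0 := by
      rw [hone, map_sum]
      exact Finset.sum_eq_zero fun x _ => hμ_ne' _ (by simp) a
    constructor
    · rw [h1]; simp
    · rw [h2]; simp
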